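/- For the four qubit states |ψ_k⟩ = sin θ |0⟩ + i^k cos θ |1⟩, k = 0,1,2,3, the fourth-order Bargmann invariant Δ₄ = ⟨ψ₀,ψ₁⟩⟨ψ₁,ψ₂⟩⟨ψ₂,ψ₃⟩⟨ψ₃,ψ₀⟩ equals (sin²θ + i cos²θ)⁴, and writing Δ₄ = r e^{iφ} one has r = 1/(cos(φ/4) + sin(φ/4))⁴. -/

import Mathlib

open Matrix Real

lemma quartic_roots {u v : ℂ} (h : u ^ 4 = v ^ 4) :
    u = v ∨ u = -v ∨ u = Complex.I * v ∨ u = -(Complex.I * v) := by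
  have h0 : (u - v) * (u + v) * (u - Complex.I * v) * (u + Complex.I * v) = 0 := by
    linear_combination h + (v ^ 4 - u ^ 2 * v ^ 2) * Complex.I_sq
  rcases mul_eq_zero.mp h0 with h1 | h1
  · rcases mul_eq_zero.mp h1 with h2 | h2
    · rcases mul_eq_zero.mp h2 with h3 | h3
      · exact Or.inl (sub_eq_zero.mp h3)
      · exact Or.inr (Or.inl (eq_neg_of_add_eq_zero_left h3))
    · exact Or.inr (Or.inr (Or.inl (sub_eq_zero.mp h2)))
  · exact Or.inr (Or.inr (Or.inr (eq_neg_of_add_eq_zero_left h1)))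

lemma part2 (s c : ℝ) (hs : 0 ≤ s) (hc : 0 ≤ c) (hsc : s + c = 1)
    (r φ : ℝ) (hr : 0 < r) (hφ0 : 0 ≤ φ) (hφ2 : φ < 2 * π)
    (h : ((s : ℂ) + Complex.I * (c : ℂ)) ^ 4 = (r : ℂ) * Complex.exp (φ * Complex.I)) :
    r = 1 / (cos (φ / 4) + sin (φ / 4)) ^ 4 := by
  set z : ℂ := (s : ℂ) + Complex.I * (c : ℂ) with hzdef
  have hre : z.re = s := by simp [hzdef]
  have him : z.im = c := by simp [hzdef]
  have hz0 : z ≠ 0 := by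
    intro h0
    have e1 : s = 0 := by rw [← hre, h0]; rfl
    have e2 : c = 0 := by rw [← him, h0]; rfl
    linarith
  set m : ℝ := ‖z‖ with hmdef
  have hm : 0 < m := norm_pos_iff.mpr hz0
  -- r = m^4
  have hrm : m ^ 4 = r := by
    have := congrArg (fun x : ℂ => ‖x‖) h
    simpa [_root_.map_pow, _root_.map_mul, Complex.norm_real, Real.norm_eq_abs, Complex.norm_exp_ofReal_mul_I, norm_pow, norm_mul,
      abs_of_pos hr, ← hmdef] using this
  set β : ℝ := φ / 4 with hβdef
  have hβ0 : 0 ≤ β := by positivity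
  have hβ1 : β < π / 2 := by
    rw [hβdef]; linarith
  have hcos : 0 < cos β := Real.cos_pos_of_mem_Ioo ⟨by linarith [pi_pos], hβ1⟩
  have hsin : 0 ≤ sin β := Real.sin_nonneg_of_nonneg_of_le_pi hβ0 (by linarith [pi_pos])
  set w : ℂ := (m : ℂ) * Complex.exp (β * Complex.I) with hwdef
  have hwre : w.re = m * cos β := by
    simp [hwdef, Complex.mul_re, Complex.exp_ofReal_mul_I_re, Complex.exp_ofReal_mul_I_im]
  have hwim : w.im = m * sin β := by
    simp [hwdef, Complex.mul_im, Complex.exp_ofReal_mul_I_re, Complex.exp_ofReal_mul_I_im]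
  have hw4 : z ^ 4 = w ^ 4 := by
    have he : Complex.exp ((β : ℂ) * Complex.I) ^ 4 = Complex.exp ((φ : ℂ) * Complex.I) := by
      rw [← Complex.exp_nat_mul]
      congr 1
      push_cast [hβdef]
      ring
    calc z ^ 4 = (r : ℂ) * Complex.exp (φ * Complex.I) := h
      _ = ((m : ℂ)) ^ 4 * Complex.exp ((φ:ℂ) * Complex.I) := by
          rw [← hrm]; push_cast; ring
      _ = w ^ 4 := by rw [hwdef, ← he]; ring
  have hmc : 0 < m * cos β := mul_pos hm hcos
  have hms : 0 ≤ m * sin β := mul_nonneg hm.le hsin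
  have key : (cos β + sin β) * m = 1 := by
    rcases quartic_roots hw4 with hcase | hcase | hcase | hcase
    · rw [Complex.ext_iff, hre, him, hwre, hwim] at hcase
      obtain ⟨e1, e2⟩ := hcase
      linarith
    · rw [Complex.ext_iff, hre, him] at hcase
      simp only [Complex.neg_re, Complex.neg_im, hwre, hwim] at hcase
      obtain ⟨e1, e2⟩ := hcase
      linarith
    · rw [Complex.ext_iff, hre, him] at hcase
      simp only [Complex.mul_re, Complex.mul_im, Complex.I_re, Complex.I_im, hwre, hwim,
        zero_mul, one_mul, zero_sub, zero_add] at hcase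
      obtain ⟨e1, e2⟩ := hcase
      linarith
    · rw [Complex.ext_iff, hre, him] at hcase
      simp only [Complex.neg_re, Complex.neg_im, Complex.mul_re, Complex.mul_im,
        Complex.I_re, Complex.I_im, hwre, hwim, zero_mul, one_mul, zero_sub, zero_add,
        neg_neg] at hcase
      obtain ⟨e1, e2⟩ := hcase
      linarith
  have hpos : 0 < cos β + sin β := by linarith
  rw [eq_div_iff (by positivity)]
  calc r * (cos β + sin β) ^ 4 = ((cos β + sin β) * m) ^ 4 := by rw [← hrm]; ring
    _ = 1 := by rw [key]; norm_num

/-- For the qubit family `ψ_k = sin θ |0⟩ + i^k cos θ |1⟩`, the fourth-order Bargmann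
invariant equals `(sin²θ + i cos²θ)⁴`, and writing it as `r e^{iφ}` with `φ ∈ [0,2π)`
one has `r = 1/(cos(φ/4)+sin(φ/4))⁴`. -/
theorem qubit_circulant_invariant (θ : ℝ)
    (ψ : Fin 4 → Fin 2 → ℂ)
    (hψ : ∀ k : Fin 4, ψ k = ![(sin θ : ℂ), Complex.I ^ (k : ℕ) * (cos θ : ℂ)])
    (Δ : ℂ)
    (hΔ : Δ = (star (ψ 0) ⬝ᵥ ψ 1) * (star (ψ 1) ⬝ᵥ ψ 2) * (star (ψ 2) ⬝ᵥ ψ 3)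
        * (star (ψ 3) ⬝ᵥ ψ 0)) :
    Δ = ((sin θ ^ 2 : ℝ) + Complex.I * (cos θ ^ 2 : ℝ)) ^ 4 ∧
    ∀ r φ : ℝ, 0 < r → 0 ≤ φ → φ < 2 * π →
      Δ = (r : ℂ) * Complex.exp (φ * Complex.I) →
      r = 1 / (cos (φ / 4) + sin (φ / 4)) ^ 4 := by
  have h4 : ∀ n : ℕ, (-Complex.I) ^ n * Complex.I ^ (n + 1) = Complex.I := by
    intro n
    have h1 : (-Complex.I) * Complex.I = 1 := by
      simp [Complex.I_mul_I]
    rw [pow_succ, ← mul_assoc, ← mul_pow, h1, one_pow, one_mul]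
  have key : ∀ k k' : Fin 4, ((k':ℕ) = (k:ℕ) + 1 ∨ ((k:ℕ) = 3 ∧ (k':ℕ) = 0)) →
      star (ψ k) ⬝ᵥ ψ k' = (sin θ ^ 2 : ℝ) + Complex.I * (cos θ ^ 2 : ℝ) := by
    intro k k' hk
    simp only [hψ, dotProduct, Fin.sum_univ_two, Matrix.cons_val_zero, Matrix.cons_val_one,
      Matrix.head_cons, Pi.star_apply, Complex.star_def, _root_.map_mul, _root_.map_pow,
      Complex.conj_ofReal, Complex.conj_I]
    push_cast
    rcases hk with h | ⟨h1, h2⟩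
    · rw [h]
      linear_combination (Complex.cos (θ:ℂ) ^ 2) * h4 (k:ℕ)
    · rw [h1, h2]
      linear_combination (-Complex.I * Complex.cos (θ:ℂ) ^ 2) * Complex.I_sq
  have hΔz : Δ = ((sin θ ^ 2 : ℝ) + Complex.I * (cos θ ^ 2 : ℝ)) ^ 4 := by
    rw [hΔ, key 0 1 (Or.inl rfl), key 1 2 (Or.inl rfl), key 2 3 (Or.inl rfl),
      key 3 0 (Or.inr ⟨rfl, rfl⟩)]
    ring
  refine ⟨hΔz, fun r φ hr hφ0 hφ2 hrφ => ?_⟩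
  exact part2 (sin θ ^ 2) (cos θ ^ 2) (sq_nonneg _) (sq_nonneg _) (sin_sq_add_cos_sq θ)
    r φ hr hφ0 hφ2 (hΔz ▸ hrφ ▸ rfl)
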